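/- Let B ∈ R^{m×m} be symmetric positive definite and let k_p > 0 and k_v be real numbers with k_v I > B^{-1} (in the Loewner order). Then the block matrix P = [[(k_p + k_v) B², B],[B, B]] is symmetric positive definite. -/

import Mathlib

open Matrix

section Aux

variable {n : Type*} [Fintype n] [DecidableEq n]

omit [DecidableEq n] in
lemma posDef_smul' {A : Matrix n n ℝ} (hA : A.PosDef) {c : ℝ} (hc : 0 < c) :
    (c • A).PosDef := by
  refine Matrix.PosDef.of_dotProduct_mulVec_pos ?_ (fun x hx => ?_)
  · unfold Matrix.IsHermitian
    rw [conjTranspose_smul, hA.1.eq]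
    simp
  · have h := hA.dotProduct_mulVec_pos hx
    rw [Matrix.smul_mulVec, dotProduct_smul]
    exact mul_pos hc h

lemma posDef_conj' {A N : Matrix n n ℝ} (hA : A.PosDef) (hN : IsUnit N) :
    (Nᴴ * A * N).PosDef := by
  refine Matrix.PosDef.of_dotProduct_mulVec_pos ?_ (fun x hx => ?_)
  · unfold Matrix.IsHermitian
    rw [conjTranspose_mul, conjTranspose_mul, conjTranspose_conjTranspose, hA.1.eq,
      Matrix.mul_assoc]
  · have hNx : N *ᵥ x ≠ 0 := by
      intro h
      apply hx
      have := congrArg (fun y => N⁻¹ *ᵥ y) h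
      simpa [Matrix.mulVec_mulVec, Matrix.nonsing_inv_mul N (by simpa using hN.map Matrix.detMonoidHom)] using this
    have h := hA.dotProduct_mulVec_pos hNx
    rw [Matrix.mul_assoc, ← Matrix.mulVec_mulVec, ← Matrix.mulVec_mulVec]
    rwa [dotProduct_mulVec, star_mulVec, ← dotProduct_mulVec, ← dotProduct_mulVec] at h
    
end Aux

/-- If `B` is symmetric positive definite, `k_p > 0` and
`k_v I > B⁻¹` in the Loewner order (i.e. `k_v I - B⁻¹` is positive definite),
then the block matrix `P = [[(k_p + k_v) B², B],[B, B]]` is positive definite. -/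
theorem stmt2 {m : ℕ} (B : Matrix (Fin m) (Fin m) ℝ) (hB : B.PosDef)
    (kp kv : ℝ) (hkp : 0 < kp)
    (hkv : (kv • (1 : Matrix (Fin m) (Fin m) ℝ) - B⁻¹).PosDef) :
    (Matrix.fromBlocks ((kp + kv) • (B * B)) B B B).PosDef := by
  set A : Matrix (Fin m) (Fin m) ℝ := (kp + kv) • (B * B) with hA
  have hBH : Bᴴ = B := hB.1
  haveI : Invertible B := hB.isUnit.invertible
  -- the Schur complement
  have hS : (A - B * B⁻¹ * Bᴴ).PosDef := by
    have h1 : (kp • (B * B)).PosDef := by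
      have := posDef_conj' (posDef_smul' Matrix.PosDef.one hkp) hB.isUnit
      rw [hBH] at this
      simpa [Matrix.mul_smul, Matrix.smul_mul, Matrix.mul_one] using this
    have h2 : (Bᴴ * (kv • (1 : Matrix (Fin m) (Fin m) ℝ) - B⁻¹) * B).PosDef :=
      posDef_conj' hkv hB.isUnit
    have key : A - B * B⁻¹ * Bᴴ
        = kp • (B * B) + Bᴴ * (kv • (1 : Matrix (Fin m) (Fin m) ℝ) - B⁻¹) * B := by
      rw [hA, hBH]
      rw [Matrix.mul_sub, Matrix.sub_mul, Matrix.mul_smul, Matrix.mul_one, Matrix.smul_mul,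
        add_smul]
      abel
    rw [key]
    exact h1.add h2
  -- Hermitian part
  have herm : (Matrix.fromBlocks A B B B).IsHermitian := by
    rw [show Matrix.fromBlocks A B B B = Matrix.fromBlocks A B Bᴴ B from by rw [hBH]]
    exact (Matrix.IsHermitian.fromBlocks₂₂ A B hB.1).mpr hS.1
  refine Matrix.PosDef.of_dotProduct_mulVec_pos herm (fun x hx => ?_)
  rw [show Matrix.fromBlocks A B B B = Matrix.fromBlocks A B Bᴴ B from by rw [hBH]]
  rw [dotProduct_mulVec, ← Sum.elim_comp_inl_inr x,
    Matrix.schur_complement_eq₂₂ A B (x ∘ Sum.inl) (x ∘ Sum.inr) hB.1]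
  by_cases h1 : x ∘ Sum.inl = 0
  · have h2 : x ∘ Sum.inr ≠ 0 := by
      intro h2
      apply hx
      ext i
      cases i with
      | inl i => exact congrFun h1 i
      | inr i => exact congrFun h2 i
    have hpos : 0 < star ((B⁻¹ * Bᴴ) *ᵥ (x ∘ Sum.inl) + x ∘ Sum.inr) ᵥ* B ⬝ᵥ
        ((B⁻¹ * Bᴴ) *ᵥ (x ∘ Sum.inl) + x ∘ Sum.inr) := by
      have hz : (B⁻¹ * Bᴴ) *ᵥ (x ∘ Sum.inl) + x ∘ Sum.inr = x ∘ Sum.inr := by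
        rw [h1]; simp
      rw [hz]
      have := hB.dotProduct_mulVec_pos h2
      rwa [dotProduct_mulVec] at this
    have hnn : 0 ≤ star (x ∘ Sum.inl) ᵥ* (A - B * B⁻¹ * Bᴴ) ⬝ᵥ (x ∘ Sum.inl) := by
      have := hS.posSemidef.dotProduct_mulVec_nonneg (x ∘ Sum.inl)
      rwa [dotProduct_mulVec] at this
    linarith
  · have hpos : 0 < star (x ∘ Sum.inl) ᵥ* (A - B * B⁻¹ * Bᴴ) ⬝ᵥ (x ∘ Sum.inl) := by
      have := hS.dotProduct_mulVec_pos h1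
      rwa [dotProduct_mulVec] at this
    have hnn : 0 ≤ star ((B⁻¹ * Bᴴ) *ᵥ (x ∘ Sum.inl) + x ∘ Sum.inr) ᵥ* B ⬝ᵥ
        ((B⁻¹ * Bᴴ) *ᵥ (x ∘ Sum.inl) + x ∘ Sum.inr) := by
      have := hB.posSemidef.dotProduct_mulVec_nonneg ((B⁻¹ * Bᴴ) *ᵥ (x ∘ Sum.inl) + x ∘ Sum.inr)
      rwa [dotProduct_mulVec] at this
    linarith
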